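/- Let (A, Cᵗ_A) and (B, Cᵗ_B) be tangled closure algebras with A finite, and let f : A → B be a Boolean homomorphism preserving the induced closure operators (f(C_A a) = C_B(f a)). Then f preserves tangled closure: f(Cᵗ_A Γ) = Cᵗ_B {f γ : γ ∈ Γ} for every finite nonempty Γ ⊆ A. -/

import Mathlib

theorem stmt_12 {A B : Type*} [BooleanAlgebra A] [BooleanAlgebra B]
    [Fintype A] [DecidableEq B]
    (CtA : Finset A → A) (CA : A → A)
    (hCA : ∀ a, CA a = CtA {a})
    (haddA : ∀ a b, CA (a ⊔ b) = CA a ⊔ CA b)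
    (hbotA : CA ⊥ = ⊥)
    (hinflA : ∀ a, a ≤ CA a)
    (hidemA : ∀ a, CA (CA a) = CA a)
    (hFixA : ∀ Γ : Finset A, Γ.Nonempty → CtA Γ ≤ Γ.inf (fun γ => CA (γ ⊓ CtA Γ)))
    (hIndA : ∀ (Γ : Finset A) (a : A), Γ.Nonempty →
      (CA ((aᶜ ⊔ Γ.inf (fun γ => CA (γ ⊓ a)))ᶜ))ᶜ ⊓ a ≤ CtA Γ)
    (CtB : Finset B → B) (CB : B → B)
    (hCB : ∀ b, CB b = CtB {b})
    (haddB : ∀ a b, CB (a ⊔ b) = CB a ⊔ CB b)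
    (hbotB : CB ⊥ = ⊥)
    (hinflB : ∀ b, b ≤ CB b)
    (hidemB : ∀ b, CB (CB b) = CB b)
    (hFixB : ∀ Γ : Finset B, Γ.Nonempty → CtB Γ ≤ Γ.inf (fun γ => CB (γ ⊓ CtB Γ)))
    (hIndB : ∀ (Γ : Finset B) (b : B), Γ.Nonempty →
      (CB ((bᶜ ⊔ Γ.inf (fun γ => CB (γ ⊓ b)))ᶜ))ᶜ ⊓ b ≤ CtB Γ)
    (f : A → B)
    (hinf : ∀ a b, f (a ⊓ b) = f a ⊓ f b)
    (hsup : ∀ a b, f (a ⊔ b) = f a ⊔ f b)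
    (hcompl : ∀ a, f aᶜ = (f a)ᶜ)
    (hbot : f ⊥ = ⊥) (htop : f ⊤ = ⊤)
    (hclos : ∀ a, f (CA a) = CB (f a))
    (Γ : Finset A) (hne : Γ.Nonempty) :
    f (CtA Γ) = CtB (Γ.image f) := by
  classical
  have hmono : ∀ a b : A, a ≤ b → f a ≤ f b := by
    intro a b h
    have : f a ⊓ f b = f a := by rw [← hinf, inf_eq_left.mpr h]
    exact inf_eq_left.mp this
  have hCBmono : ∀ a b : B, a ≤ b → CB a ≤ CB b := by
    intro a b h
    have : CB b = CB a ⊔ CB b := by rw [← haddB, sup_eq_right.mpr h]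
    rw [this]; exact le_sup_left
  -- forward direction
  set x := f (CtA Γ) with hx
  have hxle : ∀ γ ∈ Γ, x ≤ CB (f γ ⊓ x) := by
    intro γ hγ
    have h1 : CtA Γ ≤ CA (γ ⊓ CtA Γ) :=
      le_trans (hFixA Γ hne) (Finset.inf_le hγ)
    have := hmono _ _ h1
    rwa [hclos, hinf] at this
  have hxinf : x ≤ (Γ.image f).inf (fun δ => CB (δ ⊓ x)) := by
    apply Finset.le_inf
    intro δ hδ
    obtain ⟨γ, hγ, rfl⟩ := Finset.mem_image.mp hδ
    exact hxle γ hγ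
  have hfwd : x ≤ CtB (Γ.image f) := by
    have hne' : (Γ.image f).Nonempty := hne.image f
    have htopb : (xᶜ ⊔ (Γ.image f).inf (fun δ => CB (δ ⊓ x))) = ⊤ := by
      apply le_antisymm le_top
      calc (⊤ : B) = xᶜ ⊔ x := (compl_sup_eq_top).symm
        _ ≤ _ := sup_le_sup_left hxinf _
    have := hIndB (Γ.image f) x hne'
    rw [htopb] at this
    simpa [hbotB] using this
  -- reverse direction
  set y := CtB (Γ.image f) with hy
  set S : Finset A := Finset.univ.filter (fun a => y ≤ f a) with hS
  set astar : A := S.inf id with hastar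
  have hfinf : ∀ (T : Finset A), f (T.inf id) = T.inf f := by
    intro T
    induction T using Finset.induction with
    | empty => simpa using htop
    | insert _ _ h ih => rw [Finset.inf_insert, Finset.inf_insert, hinf, ih]; rfl
  have hyastar : y ≤ f astar := by
    rw [hastar, hfinf]
    exact Finset.le_inf fun a ha => (Finset.mem_filter.mp ha).2
  have hmin : ∀ a : A, y ≤ f a → astar ≤ a := by
    intro a h
    exact Finset.inf_le (Finset.mem_filter.mpr ⟨Finset.mem_univ a, h⟩)
  have hstep : ∀ γ ∈ Γ, astar ≤ CA (γ ⊓ astar) := by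
    intro γ hγ
    apply hmin
    have h1 : y ≤ CB (f γ ⊓ y) :=
      le_trans (hFixB (Γ.image f) (hne.image f))
        (Finset.inf_le (Finset.mem_image_of_mem f hγ))
    have h2 : CB (f γ ⊓ y) ≤ CB (f γ ⊓ f astar) :=
      hCBmono _ _ (inf_le_inf_left _ hyastar)
    rw [hclos, hinf]
    exact le_trans h1 h2
  have hainf : astar ≤ Γ.inf (fun γ => CA (γ ⊓ astar)) :=
    Finset.le_inf hstep
  have hrev : astar ≤ CtA Γ := by
    have htopa : (astarᶜ ⊔ Γ.inf (fun γ => CA (γ ⊓ astar))) = ⊤ := by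
      apply le_antisymm le_top
      calc (⊤ : A) = astarᶜ ⊔ astar := (compl_sup_eq_top).symm
        _ ≤ _ := sup_le_sup_left hainf _
    have := hIndA Γ astar hne
    rw [htopa] at this
    simpa [hbotA] using this
  exact le_antisymm hfwd (le_trans hyastar (hmono _ _ hrev))
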